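/- Let 1 → H → G → G' → 1 be an exact sequence of groups admitting a set-theoretic section s : G' → G of the projection p : G → G' with s(1) = 1. Suppose G acts on a set X, G' acts on a set X', and f : X → X' is equivariant with respect to p. Assume that: (1) there is a nice quotient (π_H : X → Q_H, σ_H, ρ_H) for the H-action on X; (2) there is a nice quotient (π' : X' → Q', σ', ρ') for the G'-action on X'; and (3) whenever x ∈ X and g ∈ G satisfy f(g·x) = f(x), there exists h ∈ H with g·x = h·x. Then there exists a nice quotient for the G-action on X. -/

import Mathlib

/-- Relative construction of nice quotients.  Given an exact sequence of
groups `1 → H → G → G' → 1` (`φ : H → G` injective, `p : G → G'` surjective with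
`range φ = ker p`) admitting a set-theoretic section `s` of `p` with `s(1) = 1`, an
action of `G` on `X`, an action of `G'` on `X'`, a `p`-equivariant map `f : X → X'`,
nice quotients for the `H`-action on `X` and for the `G'`-action on `X'`, and such that
whenever `f(g•x) = f(x)` the elements `g•x` and `x` differ by the action of `H`,
there exists a nice quotient for the `G`-action on `X` (which may be taken to be a
subset of `Q_H`). -/
theorem stmt8 {H G G' X X' QH Q' : Type*} [Group H] [Group G] [Group G']
    [MulAction G X] [MulAction G' X']
    (φ : H →* G) (p : G →* G') (hφ : Function.Injective φ)
    (hp : Function.Surjective p) (hexact : ∀ g : G, g ∈ φ.range ↔ p g = 1)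
    (s : G' → G) (hs : ∀ g' : G', p (s g') = g') (hs1 : s 1 = 1)
    (f : X → X') (hequiv : ∀ (g : G) (x : X), f (g • x) = p g • f x)
    (πH : X → QH) (σH : QH → X) (ρH : X → H)
    (hπH : ∀ (h : H) (x : X), πH (φ h • x) = πH x)
    (hσH : ∀ q : QH, πH (σH q) = q)
    (hdecH : ∀ x : X, x = φ (ρH x) • σH (πH x))
    (hρσH : ∀ q : QH, ρH (σH q) = 1)
    (π' : X' → Q') (σ' : Q' → X') (ρ' : X' → G')
    (hπ' : ∀ (g' : G') (x' : X'), π' (g' • x') = π' x')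
    (hσ' : ∀ q : Q', π' (σ' q) = q)
    (hdec' : ∀ x' : X', x' = ρ' x' • σ' (π' x'))
    (hρσ' : ∀ q : Q', ρ' (σ' q) = 1)
    (hfib : ∀ (x : X) (g : G), f (g • x) = f x → ∃ h : H, g • x = φ h • x) :
    ∃ (Q : Set QH) (π : X → Q) (σ : Q → X) (ρ : X → G),
      (∀ (g : G) (x : X), π (g • x) = π x) ∧
      (∀ q : Q, π (σ q) = q) ∧
      (∀ x : X, x = ρ x • σ (π x)) ∧
      (∀ q : Q, ρ (σ q) = 1) := by
    -- key: p ∘ φ = 1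
  have hpφ : ∀ h : H, p (φ h) = 1 := fun h => (hexact (φ h)).1 ⟨h, rfl⟩
  set g : X → G := fun x => s (ρ' (f x)) with hg
  set y : X → X := fun x => (g x)⁻¹ • x with hy
  -- f (y x) = σ' (π' (f x))
  have hfy : ∀ x : X, f (y x) = σ' (π' (f x)) := by
    intro x
    have := hequiv (g x)⁻¹ x
    rw [hy]
    simp only [this, map_inv, hg, hs]
    rw [hequiv, map_inv, hs, inv_smul_eq_iff]
    exact hdec' (f x)
  have hρfy : ∀ x : X, ρ' (f (y x)) = 1 := fun x => by rw [hfy]; exact hρσ' _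
  -- f (σH (πH z)) = f z when working with z = y x (in fact always)
  have hfσH : ∀ z : X, f (σH (πH z)) = f z := by
    intro z
    conv_rhs => rw [hdecH z, hequiv, hpφ, one_smul]
  refine ⟨{q : QH | ρ' (f (σH q)) = 1}, fun x => ⟨πH (y x), ?_⟩, fun q => σH q,
    fun x => g x * φ (ρH (y x)), ?_, ?_, ?_, ?_⟩
  · show ρ' (f (σH (πH (y x)))) = 1
    rw [hfσH, hρfy]
  · -- invariance
    intro g₀ x
    apply Subtype.ext
    show πH (y (g₀ • x)) = πH (y x)
    have hk : y (g₀ • x) = ((g (g₀ • x))⁻¹ * g₀ * g x) • y x := by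
      simp [hy, smul_smul, mul_assoc]
    have hf : f (((g (g₀ • x))⁻¹ * g₀ * g x) • y x) = f (y x) := by
      rw [← hk, hfy, hfy, hequiv, hπ']
    obtain ⟨h, hh⟩ := hfib (y x) _ hf
    rw [hk, hh, hπH]
  · -- π ∘ σ = id
    rintro ⟨q, hq⟩
    apply Subtype.ext
    show πH (y (σH q)) = q
    have hq' : ρ' (f (σH q)) = 1 := hq
    have : g (σH q) = 1 := by show s (ρ' (f (σH q))) = 1; rw [hq', hs1]
    rw [hy]; simp only [this, inv_one, one_smul, hσH]
  · -- decomposition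
    intro x
    show x = (g x * φ (ρH (y x))) • σH (πH (y x))
    rw [mul_smul, ← hdecH (y x), hy, smul_inv_smul]
  · -- ρ ∘ σ = 1
    rintro ⟨q, hq⟩
    show g (σH q) * φ (ρH (y (σH q))) = 1
    have hq' : ρ' (f (σH q)) = 1 := hq
    have h1 : g (σH q) = 1 := by show s (ρ' (f (σH q))) = 1; rw [hq', hs1]
    rw [h1, hy]; simp [h1, hρσH]
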